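/- Let T ⊂ R² be the reference triangle with vertices (0,0), (1,0), (0,1), F the edge on the x-axis, η_{F,ε}(x,y) = exp(−y/ε) x(1−x−y) for 0 < ε ≤ 1. Then there is a constant C independent of ε such that ‖∇η_{F,ε}‖_{L²(T)} ≤ C ε^{−1/2}. -/

import Mathlib

open MeasureTheory

/-- The reference triangle with vertices `(0,0)`, `(1,0)`, `(0,1)`. -/
def refTriangle : Set (EuclideanSpace ℝ (Fin 2)) :=
  {p | 0 ≤ p 0 ∧ 0 ≤ p 1 ∧ p 0 + p 1 ≤ 1}

/-- The modified face bubble `η_{F,ε}(x,y) = exp(-y/ε) x(1-x-y)`. -/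
noncomputable def expBubble (ε : ℝ) (p : EuclideanSpace ℝ (Fin 2)) : ℝ :=
  Real.exp (-(p 1 / ε)) * (p 0 * (1 - p 0 - p 1))

lemma hasFDerivAt_expBubble (ε : ℝ) (p : EuclideanSpace ℝ (Fin 2)) :
    HasFDerivAt (expBubble ε)
      ((Real.exp (-(p 1 / ε)) * (1 - 2 * p 0 - p 1)) • (EuclideanSpace.proj 0 : EuclideanSpace ℝ (Fin 2) →L[ℝ] ℝ) +
       (Real.exp (-(p 1 / ε)) * (-(p 0 * (1 - p 0 - p 1)) / ε - p 0)) • (EuclideanSpace.proj 1 : EuclideanSpace ℝ (Fin 2) →L[ℝ] ℝ)) p := by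
  have hx : HasFDerivAt (fun q : EuclideanSpace ℝ (Fin 2) => q 0)
      (EuclideanSpace.proj 0 : EuclideanSpace ℝ (Fin 2) →L[ℝ] ℝ) p :=
    (EuclideanSpace.proj (𝕜 := ℝ) (0 : Fin 2)).hasFDerivAt
  have hy : HasFDerivAt (fun q : EuclideanSpace ℝ (Fin 2) => q 1)
      (EuclideanSpace.proj 1 : EuclideanSpace ℝ (Fin 2) →L[ℝ] ℝ) p :=
    (EuclideanSpace.proj (𝕜 := ℝ) (1 : Fin 2)).hasFDerivAt
  have hfun : expBubble ε = fun q : EuclideanSpace ℝ (Fin 2) =>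
      Real.exp ((-ε⁻¹) * q 1) * (q 0 * (1 - q 0 - q 1)) := by
    funext q
    rw [expBubble]
    ring_nf
  rw [hfun]
  have ht := (hy.const_mul (-ε⁻¹)).exp
  have hv := hx.mul (((hasFDerivAt_const (1:ℝ) p).sub hx).sub hy)
  have h := ht.mul hv
  refine h.congr_fderiv ?_
  · ext w
    simp [smul_smul]
    ring_nf

set_option maxHeartbeats 1000000 in
lemma norm_gradient_expBubble_le {ε : ℝ} (hε : 0 < ε) (hε1 : ε ≤ 1)
    {p : EuclideanSpace ℝ (Fin 2)} (h0 : 0 ≤ p 0) (h1 : 0 ≤ p 1) (hs : p 0 + p 1 ≤ 1) :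
    ‖gradient (expBubble ε) p‖ ≤ 3 / ε * Real.exp (-(p 1 / ε)) := by
  set x := p 0 with hxd
  set y := p 1 with hyd
  set u := Real.exp (-(y / ε)) with hud
  set a := u * (1 - 2 * x - y) with had
  set b := u * (-(x * (1 - x - y)) / ε - x) with hbd
  have hgrad : HasGradientAt (expBubble ε)
      ((InnerProductSpace.toDual ℝ _).symm
        (a • (EuclideanSpace.proj 0 : EuclideanSpace ℝ (Fin 2) →L[ℝ] ℝ) +
         b • (EuclideanSpace.proj 1 : EuclideanSpace ℝ (Fin 2) →L[ℝ] ℝ))) p :=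
    (hasFDerivAt_iff_hasGradientAt).mp (hasFDerivAt_expBubble ε p)
  rw [hgrad.gradient, LinearIsometryEquiv.norm_map]
  have coord : ∀ (w : EuclideanSpace ℝ (Fin 2)) (i : Fin 2), |w i| ≤ ‖w‖ := by
    intro w i
    rw [EuclideanSpace.norm_eq]
    calc |w i| = Real.sqrt (‖w i‖ ^ 2) := by
          rw [Real.sqrt_sq_eq_abs]; simp [Real.norm_eq_abs, abs_abs]
      _ ≤ _ := by
          apply Real.sqrt_le_sqrt
          exact Finset.single_le_sum (f := fun j => ‖w j‖ ^ 2)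
            (fun j _ => by positivity) (Finset.mem_univ i)
  have hu : (0:ℝ) < u := Real.exp_pos _
  have hεi : (1:ℝ) ≤ 1/ε := by rw [le_div_iff₀ hε]; linarith
  have ha : |a| ≤ u := by
    rw [had, abs_mul, abs_of_pos hu]
    have h : |1 - 2 * x - y| ≤ 1 := by rw [abs_le]; constructor <;> nlinarith
    nlinarith
  have hb : |b| ≤ u * (2/ε) := by
    rw [hbd, abs_mul, abs_of_pos hu]
    have hq : x * (1 - x - y) ≤ 1 := by nlinarith
    have hqn : 0 ≤ x * (1 - x - y) := by nlinarith
    have h : |(-(x * (1 - x - y)) / ε - x)| ≤ 2/ε := by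
      have e1 : x * (1 - x - y) / ε ≤ 1 / ε := by gcongr
      have e2 : x ≤ 1 / ε := le_trans (by linarith) hεi
      rw [abs_le]; constructor
      · have h2 : -(2/ε) = -(1/ε) - 1/ε := by ring
        rw [h2, neg_div]
        linarith
      · rw [neg_div]
        have h2 : 0 ≤ x*(1-x-y)/ε := by positivity
        have h3 : (0:ℝ) < 2/ε := by positivity
        linarith
    exact mul_le_mul_of_nonneg_left h (le_of_lt hu)
  have key : ∀ w : EuclideanSpace ℝ (Fin 2),
      ‖(a • (EuclideanSpace.proj 0 : EuclideanSpace ℝ (Fin 2) →L[ℝ] ℝ) +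
        b • (EuclideanSpace.proj 1 : EuclideanSpace ℝ (Fin 2) →L[ℝ] ℝ)) w‖ ≤
      (3 / ε * u) * ‖w‖ := by
    intro w
    have hLw : (a • (EuclideanSpace.proj 0 : EuclideanSpace ℝ (Fin 2) →L[ℝ] ℝ) +
        b • (EuclideanSpace.proj 1 : EuclideanSpace ℝ (Fin 2) →L[ℝ] ℝ)) w = a * w 0 + b * w 1 := by
      simp
    rw [hLw, Real.norm_eq_abs]
    have hw0 := coord w 0
    have hw1 := coord w 1
    have hwnn : (0:ℝ) ≤ ‖w‖ := norm_nonneg w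
    have t1 : |a * w 0 + b * w 1| ≤ |a| * |w 0| + |b| * |w 1| := by
      calc |a * w 0 + b * w 1| ≤ |a * w 0| + |b * w 1| := abs_add_le _ _
        _ = |a| * |w 0| + |b| * |w 1| := by rw [abs_mul a (w 0), abs_mul b (w 1)]
    have t2 : |a| * |w 0| ≤ u * ‖w‖ :=
      mul_le_mul ha hw0 (abs_nonneg _) (le_of_lt hu)
    have t3 : |b| * |w 1| ≤ (u * (2/ε)) * ‖w‖ :=
      mul_le_mul hb hw1 (abs_nonneg _) (by positivity)
    have t4 : u * ‖w‖ + (u * (2/ε)) * ‖w‖ ≤ (3 / ε * u) * ‖w‖ := by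
      have h5' : u ≤ 1/ε * u := by nlinarith
      have h5 : u * ‖w‖ ≤ (1/ε * u) * ‖w‖ := mul_le_mul_of_nonneg_right h5' hwnn
      have h6 : (1/ε * u) * ‖w‖ + (u * (2/ε)) * ‖w‖ = (3 / ε * u) * ‖w‖ := by ring
      linarith
    linarith
  exact ContinuousLinearMap.opNorm_le_bound _ (by positivity) key

lemma int_exp_le {ε : ℝ} (hε : 0 < ε) :
    ∫ y in Set.Icc (0:ℝ) 1, Real.exp (-(2/ε * y)) ≤ ε/2 := by
  set c := 2/ε with hc
  have hcpos : 0 < c := by positivity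
  have hF : ∀ y : ℝ, HasDerivAt (fun t => -(1/c) * Real.exp (-(c*t)))
      (Real.exp (-(c*y))) y := by
    intro y
    have h1 : HasDerivAt (fun t : ℝ => -(c*t)) (-c) y := by
      have h := ((hasDerivAt_id y).const_mul c).neg
      simp only [mul_one] at h
      exact h
    have h2 := h1.exp
    have h3 := h2.const_mul (-(1/c))
    refine h3.congr_deriv ?_
    field_simp
  have hcont : Continuous fun y : ℝ => Real.exp (-(c*y)) := by continuity
  have heq : ∫ y in Set.Icc (0:ℝ) 1, Real.exp (-(c * y)) =
      ∫ y in (0:ℝ)..1, Real.exp (-(c*y)) := by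
    rw [MeasureTheory.integral_Icc_eq_integral_Ioc,
      intervalIntegral.integral_of_le (by norm_num : (0:ℝ) ≤ 1)]
  rw [heq, intervalIntegral.integral_eq_sub_of_hasDerivAt (fun y _ => hF y)
    (hcont.intervalIntegrable 0 1)]
  have h4 : Real.exp (-c) > 0 := Real.exp_pos _
  have h6 : (0:ℝ) < 1/c := by positivity
  have h5 : (1:ℝ)/c = ε/2 := by rw [hc]; field_simp
  simp only [mul_one, mul_zero, neg_zero, Real.exp_zero]
  nlinarith

lemma box_integral_le {ε : ℝ} (hε : 0 < ε) :
    ∫ p in ((MeasurableEquiv.toLp 2 (Fin 2 → ℝ)).symm ⁻¹'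
        (Set.univ.pi fun _ : Fin 2 => Set.Icc (0:ℝ) 1)),
      (9/ε^2 * Real.exp (-(2/ε * p 1))) ≤ 9/ε := by
  have hψ := EuclideanSpace.volume_preserving_symm_measurableEquiv_toLp (Fin 2)
  have step1 : ∫ p in ((MeasurableEquiv.toLp 2 (Fin 2 → ℝ)).symm ⁻¹'
        (Set.univ.pi fun _ : Fin 2 => Set.Icc (0:ℝ) 1)),
      (9/ε^2 * Real.exp (-(2/ε * p 1))) =
      ∫ x in (Set.univ.pi fun _ : Fin 2 => Set.Icc (0:ℝ) 1),
        (9/ε^2 * Real.exp (-(2/ε * x 1))) :=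
    hψ.setIntegral_preimage_emb (MeasurableEquiv.toLp 2 (Fin 2 → ℝ)).symm.measurableEmbedding
      (fun x => 9/ε^2 * Real.exp (-(2/ε * x 1))) _
  rw [step1]
  have hφ := volume_preserving_piFinTwo (fun _ : Fin 2 => ℝ)
  have hbox : (Set.univ.pi fun _ : Fin 2 => Set.Icc (0:ℝ) 1) =
      (MeasurableEquiv.piFinTwo (fun _ : Fin 2 => ℝ)) ⁻¹'
        (Set.Icc (0:ℝ) 1 ×ˢ Set.Icc (0:ℝ) 1) := by
    ext x
    simp [MeasurableEquiv.piFinTwo_apply, Set.mem_pi, Fin.forall_fin_two, Prod.le_def, Pi.le_def]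
  rw [hbox]
  have step2 : ∫ x in ((MeasurableEquiv.piFinTwo (fun _ : Fin 2 => ℝ)) ⁻¹'
        (Set.Icc (0:ℝ) 1 ×ˢ Set.Icc (0:ℝ) 1)),
      (9/ε^2 * Real.exp (-(2/ε * x 1))) =
      ∫ z in (Set.Icc (0:ℝ) 1 ×ˢ Set.Icc (0:ℝ) 1),
        (9/ε^2 * Real.exp (-(2/ε * z.2))) :=
    hφ.setIntegral_preimage_emb
      (MeasurableEquiv.piFinTwo (fun _ : Fin 2 => ℝ)).measurableEmbedding
      (fun z : ℝ × ℝ => 9/ε^2 * Real.exp (-(2/ε * z.2))) _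
  rw [step2]
  have step3 : ∫ z in (Set.Icc (0:ℝ) 1 ×ˢ Set.Icc (0:ℝ) 1),
        (9/ε^2 * Real.exp (-(2/ε * z.2))) =
      (∫ x in Set.Icc (0:ℝ) 1, (1:ℝ)) *
        ∫ y in Set.Icc (0:ℝ) 1, (9/ε^2 * Real.exp (-(2/ε * y))) := by
    rw [Measure.volume_eq_prod, ← Measure.prod_restrict]
    simpa using integral_prod_mul (μ := volume.restrict (Set.Icc (0:ℝ) 1))
      (ν := volume.restrict (Set.Icc (0:ℝ) 1))
      (fun _ : ℝ => (1:ℝ)) (fun y : ℝ => 9/ε^2 * Real.exp (-(2/ε * y)))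
  rw [step3]
  have h1 : ∫ x in Set.Icc (0:ℝ) 1, (1:ℝ) = 1 := by
    simp [Real.volume_Icc]
  rw [h1, one_mul, MeasureTheory.integral_const_mul]
  have h2 := int_exp_le hε
  have h3 : (0:ℝ) < 9/ε^2 := by positivity
  calc 9/ε^2 * ∫ y in Set.Icc (0:ℝ) 1, Real.exp (-(2/ε * y))
      ≤ 9/ε^2 * (ε/2) := mul_le_mul_of_nonneg_left h2 (le_of_lt h3)
    _ = 9/(2*ε) := by field_simp
    _ ≤ 9/ε := by gcongr <;> linarith

lemma cont_coord (i : Fin 2) : Continuous fun p : EuclideanSpace ℝ (Fin 2) => p i :=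
  (EuclideanSpace.proj (𝕜 := ℝ) i).continuous

lemma norm_le_two {p : EuclideanSpace ℝ (Fin 2)} (h0 : |p 0| ≤ 1) (h1 : |p 1| ≤ 1) :
    ‖p‖ ≤ 2 := by
  rw [EuclideanSpace.norm_eq]
  have : ∑ i, ‖p i‖ ^ 2 ≤ 4 := by
    rw [Fin.sum_univ_two]
    simp only [Real.norm_eq_abs]
    nlinarith [abs_nonneg (p 0), abs_nonneg (p 1)]
  calc Real.sqrt (∑ i, ‖p i‖ ^ 2) ≤ Real.sqrt 4 := Real.sqrt_le_sqrt this
    _ = 2 := by rw [show (4:ℝ) = 2^2 by norm_num, Real.sqrt_sq (by norm_num)]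

lemma refTriangle_isCompact : IsCompact refTriangle := by
  apply Metric.isCompact_of_isClosed_isBounded
  · have h1 : IsClosed {p : EuclideanSpace ℝ (Fin 2) | 0 ≤ p 0} :=
      isClosed_le continuous_const (cont_coord 0)
    have h2 : IsClosed {p : EuclideanSpace ℝ (Fin 2) | 0 ≤ p 1} :=
      isClosed_le continuous_const (cont_coord 1)
    have h3 : IsClosed {p : EuclideanSpace ℝ (Fin 2) | p 0 + p 1 ≤ 1} :=
      isClosed_le ((cont_coord 0).add (cont_coord 1)) continuous_const
    exact h1.inter (h2.inter h3)
  · apply Bornology.IsBounded.subset (Metric.isBounded_closedBall (x := (0 : EuclideanSpace ℝ (Fin 2))) (r := 2))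
    intro p hp
    obtain ⟨h0, h1, hs⟩ := hp
    rw [Metric.mem_closedBall, dist_zero_right]
    exact norm_le_two (abs_le.mpr ⟨by linarith, by linarith⟩) (abs_le.mpr ⟨by linarith, by linarith⟩)

def boxSet : Set (EuclideanSpace ℝ (Fin 2)) :=
  (MeasurableEquiv.toLp 2 (Fin 2 → ℝ)).symm ⁻¹' (Set.univ.pi fun _ : Fin 2 => Set.Icc (0:ℝ) 1)

lemma boxSet_eq : boxSet = {p : EuclideanSpace ℝ (Fin 2) | (0 ≤ p 0 ∧ p 0 ≤ 1) ∧ (0 ≤ p 1 ∧ p 1 ≤ 1)} := by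
  ext p
  simp [boxSet, Pi.le_def, Fin.forall_fin_two]
  tauto

lemma boxSet_isCompact : IsCompact boxSet := by
  rw [boxSet_eq]
  apply Metric.isCompact_of_isClosed_isBounded
  · have h1 : IsClosed {p : EuclideanSpace ℝ (Fin 2) | 0 ≤ p 0} :=
      isClosed_le continuous_const (cont_coord 0)
    have h2 : IsClosed {p : EuclideanSpace ℝ (Fin 2) | p 0 ≤ 1} :=
      isClosed_le (cont_coord 0) continuous_const
    have h3 : IsClosed {p : EuclideanSpace ℝ (Fin 2) | 0 ≤ p 1} :=
      isClosed_le continuous_const (cont_coord 1)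
    have h4 : IsClosed {p : EuclideanSpace ℝ (Fin 2) | p 1 ≤ 1} :=
      isClosed_le (cont_coord 1) continuous_const
    exact (h1.inter h2).inter (h3.inter h4)
  · apply Bornology.IsBounded.subset (Metric.isBounded_closedBall (x := (0 : EuclideanSpace ℝ (Fin 2))) (r := 2))
    rintro p ⟨⟨a,b⟩,⟨c,d⟩⟩
    rw [Metric.mem_closedBall, dist_zero_right]
    exact norm_le_two (abs_le.mpr ⟨by linarith, by linarith⟩) (abs_le.mpr ⟨by linarith, by linarith⟩)

lemma refTriangle_subset_boxSet : refTriangle ⊆ boxSet := by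
  rw [boxSet_eq]
  rintro p ⟨h0, h1, hs⟩
  exact ⟨⟨h0, by linarith⟩, ⟨h1, by linarith⟩⟩

/-- `‖∇η_{F,ε}‖_{L²(T)} ≤ C ε^{-1/2}` with `C` independent of `ε`. -/
theorem stmt_6 :
    ∃ C > 0, ∀ ε : ℝ, 0 < ε → ε ≤ 1 →
      Real.sqrt (∫ p in refTriangle, ‖gradient (expBubble ε) p‖ ^ 2) ≤
        C / Real.sqrt ε := by
  refine ⟨3, by norm_num, fun ε hε hε1 => ?_⟩
  set g : EuclideanSpace ℝ (Fin 2) → ℝ := fun p => 9/ε^2 * Real.exp (-(2/ε * p 1)) with hg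
  have hg_cont : Continuous g := by
    apply Continuous.mul continuous_const
    exact Real.continuous_exp.comp ((continuous_const.mul (cont_coord 1)).neg)
  have hgi_T : IntegrableOn g refTriangle :=
    hg_cont.continuousOn.integrableOn_compact refTriangle_isCompact
  have hgi_S : IntegrableOn g boxSet :=
    hg_cont.continuousOn.integrableOn_compact boxSet_isCompact
  have hmeas : MeasurableSet refTriangle := refTriangle_isCompact.isClosed.measurableSet
  have stepA : ∫ p in refTriangle, ‖gradient (expBubble ε) p‖ ^ 2 ≤
      ∫ p in refTriangle, g p := by
    apply integral_mono_of_nonneg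
    · exact Filter.Eventually.of_forall fun p => by positivity
    · exact hgi_T
    · refine (ae_restrict_mem hmeas).mono fun p hp => ?_
      obtain ⟨h0, h1, hs⟩ := hp
      have hb := norm_gradient_expBubble_le hε hε1 h0 h1 hs
      calc ‖gradient (expBubble ε) p‖ ^ 2
          ≤ (3 / ε * Real.exp (-(p 1 / ε))) ^ 2 :=
            pow_le_pow_left₀ (norm_nonneg _) hb 2
        _ = g p := by
            rw [hg]
            simp only [mul_pow]
            rw [pow_two (Real.exp (-(p 1 / ε))), ← Real.exp_add]
            have e1 : -(p 1 / ε) + -(p 1 / ε) = -(2/ε * p 1) := by ring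
            rw [e1]
            ring
  have stepB : ∫ p in refTriangle, g p ≤ ∫ p in boxSet, g p := by
    apply setIntegral_mono_set hgi_S
    · exact Filter.Eventually.of_forall fun p => by positivity
    · exact HasSubset.Subset.eventuallyLE refTriangle_subset_boxSet
  have stepC : ∫ p in boxSet, g p ≤ 9/ε := box_integral_le hε
  have htotal : ∫ p in refTriangle, ‖gradient (expBubble ε) p‖ ^ 2 ≤ 9/ε := by
    linarith
  calc Real.sqrt (∫ p in refTriangle, ‖gradient (expBubble ε) p‖ ^ 2)
      ≤ Real.sqrt (9/ε) := Real.sqrt_le_sqrt htotal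
    _ = Real.sqrt 9 / Real.sqrt ε := Real.sqrt_div (by norm_num) ε
    _ = 3 / Real.sqrt ε := by
        rw [show (9:ℝ) = 3^2 by norm_num, Real.sqrt_sq (by norm_num)]
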